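/- Let X be a finite alphabet and let M₁, M₂ be monoids with surjective homomorphisms σ₁ : X* → M₁ and σ₂ : X* → M₂. If L_{σ₁}(M₁) = L_{σ₂}(M₂) then there is a monoid isomorphism ρ : M₁ → M₂ with σ₁ ∘ ρ = σ₂. -/

import Mathlib

open FreeMonoid

section LoopPrelude

variable {X M : Type*} [Monoid M]

def barW {X : Type*} (w : List (X ⊕ X)) : List (X ⊕ X) := (w.map Sum.swap).reverse

def posW {X : Type*} (u : List X) : List (X ⊕ X) := u.map Sum.inl

def negW {X : Type*} (v : List X) : List (X ⊕ X) := (v.map Sum.inr).reverse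

inductive LStep (σ : FreeMonoid X →* M) : M → (X ⊕ X) → M → Prop
  | posW (a : M) (x : X) : LStep σ a (Sum.inl x) (a * σ (of x))
  | negW (a : M) (x : X) : LStep σ (a * σ (of x)) (Sum.inr x) a

inductive LPath (σ : FreeMonoid X →* M) : M → List (X ⊕ X) → M → Prop
  | nil (a : M) : LPath σ a [] a
  | cons {a b c : M} {l : X ⊕ X} {w : List (X ⊕ X)}
      (h₁ : LStep σ a l b) (h₂ : LPath σ b w c) : LPath σ a (l :: w) c

def LoopProblem (σ : FreeMonoid X →* M) : Set (List (X ⊕ X)) := { w | LPath σ 1 w 1 }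

end LoopPrelude

section SemiPrelude

variable {X S : Type*} [Semigroup S]

def SLoopProblem (f : X → S) : Set (List (X ⊕ X)) :=
  LoopProblem (FreeMonoid.lift (fun x => (f x : WithOne S)))

end SemiPrelude

section Aux

variable {X M : Type*} [Monoid M]

lemma LPath.append {σ : FreeMonoid X →* M} {a b c : M} {w₁ w₂ : List (X ⊕ X)}
    (p₁ : LPath σ a w₁ b) (p₂ : LPath σ b w₂ c) : LPath σ a (w₁ ++ w₂) c := by
  induction p₁ with
  | nil => simpa
  | cons h₁ _ ih => exact LPath.cons h₁ (ih p₂)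

lemma LPath.append_iff {σ : FreeMonoid X →* M} {a c : M} {w₁ w₂ : List (X ⊕ X)} :
    LPath σ a (w₁ ++ w₂) c ↔ ∃ b, LPath σ a w₁ b ∧ LPath σ b w₂ c := by
  constructor
  · induction w₁ generalizing a with
    | nil => intro p; exact ⟨a, LPath.nil a, by simpa using p⟩
    | cons l t ih =>
      intro p
      rcases p with _ | ⟨h₁, h₂⟩
      rcases ih h₂ with ⟨b, pb, pc⟩
      exact ⟨b, LPath.cons h₁ pb, pc⟩
  · rintro ⟨b, p₁, p₂⟩; exact p₁.append p₂

lemma lpath_posW {σ : FreeMonoid X →* M} {a b : M} {u : List X} :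
    LPath σ a (posW u) b ↔ b = a * σ (ofList u) := by
  induction u generalizing a with
  | nil =>
    constructor
    · rintro (_ | ⟨h₁, _⟩); simp
    · rintro rfl; simpa [posW] using LPath.nil a
  | cons x t ih =>
    constructor
    · rintro (_ | ⟨h₁, h₂⟩)
      rcases h₁ with ⟨_, _⟩ | _
      rw [show (List.map Sum.inl t : List (X ⊕ X)) = posW t from rfl, ih] at h₂
      rw [h₂]
      show _ = a * σ (of x * ofList t)
      rw [map_mul, mul_assoc]
    · rintro rfl
      refine LPath.cons (LStep.posW a x) ?_
      rw [show (List.map Sum.inl t : List (X ⊕ X)) = posW t from rfl, ih]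
      show a * σ (of x * ofList t) = a * σ (of x) * σ (ofList t)
      rw [map_mul, mul_assoc]

lemma lpath_negW {σ : FreeMonoid X →* M} {a b : M} {v : List X} :
    LPath σ a (negW v) b ↔ a = b * σ (ofList v) := by
  induction v generalizing b with
  | nil =>
    constructor
    · rintro (_ | ⟨h₁, _⟩); simp
    · rintro rfl; simpa [negW] using LPath.nil (b * σ (ofList []))
  | cons x t ih =>
    have hsplit : negW (x :: t) = negW t ++ [Sum.inr x] := by
      simp [negW]
    rw [hsplit, LPath.append_iff]
    constructor
    · rintro ⟨c, p₁, p₂⟩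
      rcases p₂ with _ | ⟨h₁, h₂⟩
      rcases h₂ with _ | _
      rcases h₁ with _ | ⟨_, _⟩
      rw [ih] at p₁
      rw [p₁]
      show _ = b * σ (of x * ofList t)
      rw [map_mul, ← mul_assoc]
    · rintro rfl
      refine ⟨b * σ (of x), ?_, LPath.cons (LStep.negW b x) (LPath.nil b)⟩
      rw [ih]
      show b * σ (of x * ofList t) = b * σ (of x) * σ (ofList t)
      rw [map_mul, mul_assoc]

lemma mem_loopProblem_iff {σ : FreeMonoid X →* M} (u v : FreeMonoid X) :
    posW (toList u) ++ negW (toList v) ∈ LoopProblem σ ↔ σ u = σ v := by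
  rw [LoopProblem, Set.mem_setOf_eq, LPath.append_iff]
  constructor
  · rintro ⟨b, p₁, p₂⟩
    rw [lpath_posW] at p₁
    rw [lpath_negW] at p₂
    rw [p₁] at p₂
    simpa using p₂
  · intro hσ
    refine ⟨σ u, ?_, ?_⟩
    · rw [lpath_posW]; simp
    · rw [lpath_negW]; simpa using hσ

end Aux

theorem loop_problem_determines_monoid {X M₁ M₂ : Type*} [Monoid M₁] [Monoid M₂]
    (σ₁ : FreeMonoid X →* M₁) (σ₂ : FreeMonoid X →* M₂)
    (h₁ : Function.Surjective σ₁) (h₂ : Function.Surjective σ₂)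
    (h : LoopProblem σ₁ = LoopProblem σ₂) :
    ∃ ρ : M₁ ≃* M₂, ∀ w : FreeMonoid X, ρ (σ₁ w) = σ₂ w := by
  have key : ∀ u v : FreeMonoid X, σ₁ u = σ₁ v ↔ σ₂ u = σ₂ v := by
    intro u v
    rw [← mem_loopProblem_iff (σ := σ₁), ← mem_loopProblem_iff (σ := σ₂), h]
  choose s₁ hs₁ using h₁
  choose s₂ hs₂ using h₂
  have f₂ : ∀ m : M₁, σ₂ (s₁ m) = σ₂ (s₁ m) := fun _ => rfl
  -- define maps
  set f : M₁ → M₂ := fun m => σ₂ (s₁ m) with hf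
  set g : M₂ → M₁ := fun m => σ₁ (s₂ m) with hg
  have hfσ : ∀ w : FreeMonoid X, f (σ₁ w) = σ₂ w := by
    intro w
    exact (key (s₁ (σ₁ w)) w).mp (hs₁ (σ₁ w)) 
  have hgσ : ∀ w : FreeMonoid X, g (σ₂ w) = σ₁ w := by
    intro w
    exact (key (s₂ (σ₂ w)) w).mpr (hs₂ (σ₂ w))
  have hgf : ∀ m : M₁, g (f m) = m := by
    intro m
    rw [hf]
    simp only
    rw [hgσ (s₁ m), hs₁]
  have hfg : ∀ m : M₂, f (g m) = m := by
    intro m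
    rw [hg]
    simp only
    rw [hfσ (s₂ m), hs₂]
  have hmul : ∀ a b : M₁, f (a * b) = f a * f b := by
    intro a b
    have : σ₁ (s₁ a * s₁ b) = a * b := by rw [map_mul, hs₁, hs₁]
    calc f (a * b) = f (σ₁ (s₁ a * s₁ b)) := by rw [this]
      _ = σ₂ (s₁ a * s₁ b) := hfσ _
      _ = f a * f b := by rw [map_mul]
  exact ⟨{ toFun := f, invFun := g, left_inv := hgf, right_inv := hfg, map_mul' := hmul }, hfσ⟩
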